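/- Let f, g : ℝⁿ → ℝ be twice continuously differentiable, let Q ⊆ ℝⁿ, and let 0 ≤ i, j ≤ n be integers with i + j ≥ n. If f is non-convex of grade i on Q and g is non-convex of grade j on Q, then the soft maximum smax(f, g), defined by smax(f, g)(x) := ln(e^{f(x)} + e^{g(x)}), is a twice continuously differentiable function that is non-convex of grade i + j − n on Q. -/

import Mathlib

open scoped RealInnerProductSpace
open Real Set

/-- `f` is non-convex of grade `τ` on `Q`. -/
def NonconvexOfGrade {n : ℕ} (f : EuclideanSpace ℝ (Fin n) → ℝ)
    (Q : Set (EuclideanSpace ℝ (Fin n))) (τ : ℕ) : Prop :=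
  ∀ x ∈ Q, ∃ V : Submodule ℝ (EuclideanSpace ℝ (Fin n)),
    τ ≤ Module.finrank ℝ V ∧ ∀ h ∈ V, 0 ≤ iteratedFDeriv ℝ 2 f x ![h, h]

/-- Key Hessian inequality for the soft maximum. -/
lemma smax_hessian_nonneg {n : ℕ} (f g : EuclideanSpace ℝ (Fin n) → ℝ)
    (hf : ContDiff ℝ 2 f) (hg : ContDiff ℝ 2 g) (x h : EuclideanSpace ℝ (Fin n))
    (hP : 0 ≤ fderiv ℝ (fderiv ℝ f) x h h) (hQ : 0 ≤ fderiv ℝ (fderiv ℝ g) x h h) :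
    0 ≤ fderiv ℝ (fderiv ℝ (fun x => Real.log (Real.exp (f x) + Real.exp (g x)))) x h h := by
  have hfd := hf.differentiable (by norm_num)
  have hgd := hg.differentiable (by norm_num)
  have hsne : ∀ y, Real.exp (f y) + Real.exp (g y) ≠ 0 := fun y => by positivity
  have hfd1 : fderiv ℝ (fun x => Real.log (Real.exp (f x) + Real.exp (g x))) =
      fun y => (Real.exp (f y) + Real.exp (g y))⁻¹ •
        (Real.exp (f y) • fderiv ℝ f y + Real.exp (g y) • fderiv ℝ g y) := by
    funext y
    exact (((hfd y).hasFDerivAt.exp.add (hgd y).hasFDerivAt.exp).log (hsne y)).fderiv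
  rw [hfd1]
  set a := Real.exp (f x) with ha
  set b := Real.exp (g x) with hb
  set F1 := fderiv ℝ f x
  set G1 := fderiv ℝ g x
  set F2 := fderiv ℝ (fderiv ℝ f) x
  set G2 := fderiv ℝ (fderiv ℝ g) x
  have hf1 : HasFDerivAt f F1 x := (hfd x).hasFDerivAt
  have hg1 : HasFDerivAt g G1 x := (hgd x).hasFDerivAt
  have hF2 : HasFDerivAt (fderiv ℝ f) F2 x :=
    (((hf.fderiv_right (m := 1) (by norm_num)).differentiable (by norm_num)) x).hasFDerivAt
  have hG2 : HasFDerivAt (fderiv ℝ g) G2 x :=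
    (((hg.fderiv_right (m := 1) (by norm_num)).differentiable (by norm_num)) x).hasFDerivAt
  have hs' : HasFDerivAt (fun y => Real.exp (f y) + Real.exp (g y)) (a • F1 + b • G1) x :=
    hf1.exp.add hg1.exp
  have hinv : HasFDerivAt (fun y => (Real.exp (f y) + Real.exp (g y))⁻¹)
      ((-((a + b) ^ 2)⁻¹) • (a • F1 + b • G1)) x :=
    (hasDerivAt_inv (hsne x)).comp_hasFDerivAt x hs'
  have hD : HasFDerivAt (fun y => Real.exp (f y) • fderiv ℝ f y + Real.exp (g y) • fderiv ℝ g y)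
      ((a • F2 + (a • F1).smulRight F1) + (b • G2 + (b • G1).smulRight G1)) x :=
    (hf1.exp.smul hF2).add (hg1.exp.smul hG2)
  have hfull : HasFDerivAt (fun y => (Real.exp (f y) + Real.exp (g y))⁻¹ •
      (Real.exp (f y) • fderiv ℝ f y + Real.exp (g y) • fderiv ℝ g y)) _ x := hinv.smul hD
  rw [hfull.fderiv]
  simp only [ContinuousLinearMap.add_apply, ContinuousLinearMap.coe_smul',
    Pi.smul_apply, ContinuousLinearMap.smulRight_apply, smul_eq_mul,
    ContinuousLinearMap.smul_apply, ContinuousLinearMap.neg_apply, neg_mul, neg_smul]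
  rw [← ha, ← hb]
  set u := F1 h
  set v := G1 h
  set P := F2 h h
  set Q := G2 h h
  have hapos : (0:ℝ) < a := Real.exp_pos _
  have hbpos : (0:ℝ) < b := Real.exp_pos _
  have hspos : (0:ℝ) < a + b := by linarith
  have key : (a + b)⁻¹ * (a * P + a * u * u + (b * Q + b * v * v)) +
      (-(((a + b) ^ 2)⁻¹ * (a * u + b * v) * (a * u + b * v))) =
      ((a + b) ^ 2)⁻¹ * ((a + b) * (a * P + b * Q) + a * b * (u - v) ^ 2) := by
    field_simp
    ring
  rw [key]
  have h1 : (0:ℝ) ≤ (((a + b):ℝ) ^ 2)⁻¹ := by positivity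
  apply mul_nonneg h1
  nlinarith [mul_nonneg hapos.le hP, mul_nonneg hbpos.le hQ, mul_pos hapos hbpos, sq_nonneg (u - v)]

/-- Grading rule for the soft maximum: if `f` is non-convex of grade `i` and `g` of grade `j`,
with `i + j ≥ n`, then `smax(f,g) = ln(e^f + e^g)` is twice continuously differentiable and
non-convex of grade `i + j - n`. -/
theorem smax_nonconvexOfGrade {n : ℕ} (hn : 1 ≤ n)
    (f g : EuclideanSpace ℝ (Fin n) → ℝ)
    (hf : ContDiff ℝ 2 f) (hg : ContDiff ℝ 2 g)
    (Q : Set (EuclideanSpace ℝ (Fin n)))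
    (i j : ℕ) (hi : i ≤ n) (hj : j ≤ n) (hij : n ≤ i + j)
    (hfg : NonconvexOfGrade f Q i) (hgg : NonconvexOfGrade g Q j) :
    ContDiff ℝ 2 (fun x => Real.log (Real.exp (f x) + Real.exp (g x))) ∧
    NonconvexOfGrade (fun x => Real.log (Real.exp (f x) + Real.exp (g x))) Q (i + j - n) := by
  have hsne : ∀ y, Real.exp (f y) + Real.exp (g y) ≠ 0 := fun y => by positivity
  refine ⟨(hf.exp.add hg.exp).log hsne, ?_⟩
  intro x hx
  obtain ⟨V, hVdim, hVf⟩ := hfg x hx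
  obtain ⟨W, hWdim, hWg⟩ := hgg x hx
  refine ⟨V ⊓ W, ?_, ?_⟩
  · have h1 := Submodule.finrank_sup_add_finrank_inf_eq V W
    have h2 : Module.finrank ℝ ↥(V ⊔ W) ≤ n := by
      simpa [finrank_euclideanSpace_fin] using
        Submodule.finrank_le (V ⊔ W)
    omega
  · intro h hh
    rw [iteratedFDeriv_two_apply]
    have hP := hVf h hh.1
    have hQ := hWg h hh.2
    rw [iteratedFDeriv_two_apply] at hP hQ
    simp only [Matrix.cons_val_zero, Matrix.cons_val_one, Matrix.head_cons] at hP hQ ⊢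
    exact smax_hessian_nonneg f g hf hg x h hP hQ
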